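/- Let X and Y be disjoint finite sets and A an X×Y matrix over GF(2). Let G be the simple bipartite graph on vertex set X ∪ Y in which x ∈ X and y ∈ Y are adjacent if and only if A_{xy} = 1, and no two elements of X nor two elements of Y are adjacent. Let N be the binary matroid on X ∪ Y represented by the GF(2)-matrix assigning to each x ∈ X the standard basis column e_x ∈ GF(2)^X and to each y ∈ Y the column A_{·y}. Then M[IA(G)] is isomorphic to the direct sum N ⊕ N*, via the bijection sending x ↦ φ_G(x) and y ↦ χ_G(y) on the N summand, and x ↦ χ_G(x) and y ↦ φ_G(y) on the N* summand. -/

import Mathlib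

open Matrix

noncomputable section

/-- The rank over `F` of the set of columns of `M` indexed by `S`. -/
def colSpanRank (F : Type*) [Field F] {m n : Type*} (M : Matrix m n F) (S : Set n) : ℕ :=
  Module.finrank F ↥(Submodule.span F ((fun j i => M i j) '' S))

/-- The columns of `M` indexed by `S` are linearly independent over `F`. -/
def ColIndep (F : Type*) [Field F] {m n : Type*} (M : Matrix m n F) (S : Set n) : Prop :=
  LinearIndependent F (fun j : S => (fun i => M i (j : n)))

/-- `S` is independent in the dual of the column matroid of `M`: the columns
outside `S` span the whole column space of `M`. -/
def DualColIndep (F : Type*) [Field F] {m n : Type*} (M : Matrix m n F) (S : Set n) : Prop :=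
  colSpanRank F M Sᶜ = colSpanRank F M Set.univ

/-- The matrix `IA(G) = (I | A)` over GF(2); the columns `(v,0)` and `(v,1)` are
`φ_G(v)` and `χ_G(v)` respectively. -/
def IAmat {V : Type*} [DecidableEq V] (A : Matrix V V (ZMod 2)) :
    Matrix V (V × Fin 2) (ZMod 2) :=
  Matrix.of fun v p => if p.2 = 0 then (if v = p.1 then 1 else 0) else A v p.1

/-- The adjacency matrix of the bipartite graph on `X ⊕ Y` determined by the
GF(2)-matrix `A`. -/
def bipAdj {X Y : Type*} (A : Matrix X Y (ZMod 2)) :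
    Matrix (X ⊕ Y) (X ⊕ Y) (ZMod 2) :=
  Matrix.of fun a b =>
    match a, b with
    | Sum.inl x, Sum.inr y => A x y
    | Sum.inr y, Sum.inl x => A x y
    | _, _ => 0

/-- The representation `(I | A)` of the binary matroid `N` on `X ⊕ Y`. -/
def Nmat {X Y : Type*} [DecidableEq X] (A : Matrix X Y (ZMod 2)) :
    Matrix X (X ⊕ Y) (ZMod 2) :=
  Matrix.of fun i c =>
    match c with
    | Sum.inl x => if i = x then 1 else 0
    | Sum.inr y => A i y


/-- The bijection from the ground set of `N ⊕ N*` to `W₂(G)`: on the `N` summand,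
`x ↦ φ(x)` and `y ↦ χ(y)`; on the `N*` summand, `x ↦ χ(x)` and `y ↦ φ(y)`. -/
def sumToW2 {X Y : Type*} : (X ⊕ Y) ⊕ (X ⊕ Y) → (X ⊕ Y) × Fin 2
  | Sum.inl (Sum.inl x) => (Sum.inl x, 0)
  | Sum.inl (Sum.inr y) => (Sum.inr y, 1)
  | Sum.inr (Sum.inl x) => (Sum.inl x, 1)
  | Sum.inr (Sum.inr y) => (Sum.inr y, 0)

namespace IAaux

set_option linter.unusedSectionVars false

variable {F : Type*} [Field F]

lemma colIndep_iff_mulVec {m n : Type*} [Fintype m] [Fintype n] (M : Matrix m n F) (T : Set n) :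
    ColIndep F M T ↔ ∀ g : n → F, (∀ j ∉ T, g j = 0) → M.mulVec g = 0 → g = 0 := by
  have key : ∀ l : n →₀ F,
      (Finsupp.linearCombination F (fun j i => M i j)) l = M.mulVec ⇑l := by
    intro l
    rw [Finsupp.linearCombination_apply, Finsupp.sum_fintype]
    · funext i
      simp [Matrix.mulVec, dotProduct, Finset.sum_apply, mul_comm]
    · intro j; simp
  have h := linearIndependent_comp_subtype_iff.trans (linearIndepOn_iff (R := F) (M := m → F)
    (v := fun j (i : m) => M i j) (s := T))
  rw [ColIndep, show (fun j : T => (fun i => M i (j : n))) =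
      ((fun j (i : m) => M i j) ∘ ((↑) : T → n)) from rfl, h]
  constructor
  · intro H g hg hMg
    have hgl : (Finsupp.equivFunOnFinite.symm g) = 0 := by
      apply H
      · rw [Finsupp.mem_supported']
        intro j hj
        simpa using hg j hj
      · rw [key]
        simpa using hMg
    have := congrArg (⇑Finsupp.equivFunOnFinite) hgl
    simp only [Equiv.apply_symm_apply] at this
    exact this.trans rfl
  · intro H l hl hl0
    have : (⇑l : n → F) = 0 := by
      apply H
      · exact fun j hj => (Finsupp.mem_supported' F l).mp hl j hj
      · rw [← key]; exact hl0
    exact Finsupp.coe_eq_zero.mp this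

open Module in
lemma span_cols_eq_top_iff {m n : Type*} [Fintype m] [Fintype n] (M : Matrix m n F) (T : Set n) :
    Submodule.span F ((fun j i => M i j) '' T) = ⊤ ↔
      ∀ u : m → F, (∀ j ∈ T, ∑ i, u i * M i j = 0) → u = 0 := by
  haveI : Fintype ↥T := Fintype.ofFinite ↥T
  set B : Matrix m ↥T F := M.submatrix id ((↑) : ↥T → n) with hB
  have himg : (fun j (i : m) => M i j) '' T = Set.range Bᵀ := by
    rw [Set.image_eq_range]; rfl
  have h1 : Submodule.span F ((fun j (i : m) => M i j) '' T) = LinearMap.range B.mulVecLin := by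
    rw [himg, Matrix.range_mulVecLin]; rfl
  have e1 : (LinearMap.range B.mulVecLin = ⊤) ↔ B.rank = Fintype.card m := by
    constructor
    · intro h
      rw [Matrix.rank, h, finrank_top, Module.finrank_fintype_fun_eq_card]
    · intro h
      apply Submodule.eq_top_of_finrank_eq
      rw [show finrank F ↥(LinearMap.range B.mulVecLin) = B.rank from rfl, h,
        Module.finrank_fintype_fun_eq_card]
  have hrn := LinearMap.finrank_range_add_finrank_ker (Bᵀ.mulVecLin)
  rw [Module.finrank_fintype_fun_eq_card] at hrn
  have e3 : Bᵀ.rank = Fintype.card m ↔ LinearMap.ker Bᵀ.mulVecLin = ⊥ := by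
    constructor
    · intro h
      rw [show Bᵀ.rank = finrank F ↥(LinearMap.range Bᵀ.mulVecLin) from rfl] at h
      have : finrank F ↥(LinearMap.ker Bᵀ.mulVecLin) = 0 := by omega
      exact Submodule.finrank_eq_zero.mp this
    · intro h
      rw [show Bᵀ.rank = finrank F ↥(LinearMap.range Bᵀ.mulVecLin) from rfl]
      rw [h, finrank_bot] at hrn
      omega
  rw [h1, e1, ← Matrix.rank_transpose, e3, LinearMap.ker_eq_bot']
  constructor
  · intro H u hu
    apply H u
    funext j
    simp only [Matrix.mulVecLin_apply, Matrix.mulVec, dotProduct, Matrix.transpose_apply,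
      hB, Matrix.submatrix_apply, id_eq, Pi.zero_apply]
    rw [Finset.sum_congr rfl (fun i _ => mul_comm (M i (j : n)) (u i))]
    exact hu (j : n) j.2
  · intro H u hu
    apply H u
    intro j hj
    have := congrFun hu ⟨j, hj⟩
    simp only [Matrix.mulVecLin_apply, Matrix.mulVec, dotProduct, Matrix.transpose_apply,
      hB, Matrix.submatrix_apply, id_eq, Pi.zero_apply] at this
    rw [← this]
    exact Finset.sum_congr rfl (fun i _ => mul_comm (u i) (M i j))

variable {X Y : Type} [Fintype X] [DecidableEq X] [Fintype Y] [DecidableEq Y]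

/-- The dual representation `(Aᵀ | I)`. -/
def Dmat (A : Matrix X Y (ZMod 2)) : Matrix Y (X ⊕ Y) (ZMod 2) :=
  Matrix.of fun i c =>
    match c with
    | Sum.inl x => A x i
    | Sum.inr y => if i = y then 1 else 0

/-- Row combination of `Nmat`. -/
def Phi (A : Matrix X Y (ZMod 2)) (u : X → ZMod 2) : (X ⊕ Y) → ZMod 2 :=
  fun j => ∑ i, u i * Nmat A i j

lemma dual_iff (A : Matrix X Y (ZMod 2)) (T : Set (X ⊕ Y)) :
    DualColIndep (ZMod 2) (Nmat A) T ↔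
      ∀ u : X → ZMod 2, (∀ j ∉ T, ∑ i, u i * Nmat A i j = 0) → u = 0 := by
  have huniv : Submodule.span (ZMod 2) ((fun j (i : X) => Nmat A i j) '' Set.univ) = ⊤ := by
    rw [span_cols_eq_top_iff]
    intro u hu
    funext x
    have := hu (Sum.inl x) trivial
    simpa [Nmat] using this
  have hranku : colSpanRank (ZMod 2) (Nmat A) Set.univ = Fintype.card X := by
    rw [colSpanRank, huniv, finrank_top, Module.finrank_fintype_fun_eq_card]
  rw [DualColIndep, hranku]
  constructor
  · intro h u hu
    have hsp : Submodule.span (ZMod 2) ((fun j (i : X) => Nmat A i j) '' Tᶜ) = ⊤ := by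
      apply Submodule.eq_top_of_finrank_eq
      rw [show Module.finrank (ZMod 2)
            ↥(Submodule.span (ZMod 2) ((fun j (i : X) => Nmat A i j) '' Tᶜ))
          = colSpanRank (ZMod 2) (Nmat A) Tᶜ from rfl, h, Module.finrank_fintype_fun_eq_card]
    exact (span_cols_eq_top_iff _ _).mp hsp u (fun j hj => hu j hj)
  · intro h
    have hsp : Submodule.span (ZMod 2) ((fun j (i : X) => Nmat A i j) '' Tᶜ) = ⊤ :=
      (span_cols_eq_top_iff _ _).mpr (fun u hu => h u (fun j hj => hu j hj))
    rw [colSpanRank, hsp, finrank_top, Module.finrank_fintype_fun_eq_card]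

lemma dmat_cond_iff (A : Matrix X Y (ZMod 2)) (T : Set (X ⊕ Y)) :
    (∀ b : (X ⊕ Y) → ZMod 2, (∀ j ∉ T, b j = 0) → (Dmat A).mulVec b = 0 → b = 0) ↔
      ∀ u : X → ZMod 2, (∀ j ∉ T, ∑ i, u i * Nmat A i j = 0) → u = 0 := by
  have hphi_inl : ∀ u (x : X), Phi A u (Sum.inl x) = u x := by
    intro u x
    simp [Phi, Nmat]
  have hphi_inr : ∀ u (y : Y), Phi A u (Sum.inr y) = ∑ i, u i * A i y := by
    intro u y; rfl
  have hD : ∀ (b : (X ⊕ Y) → ZMod 2) (y : Y),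
      (Dmat A).mulVec b y = (∑ x, A x y * b (Sum.inl x)) + b (Sum.inr y) := by
    intro b y
    simp [Matrix.mulVec, dotProduct, Dmat, Fintype.sum_sum_type]
  constructor
  · intro H u hu
    have hb : Phi A u = 0 := by
      apply H
      · exact fun j hj => hu j hj
      · funext y
        rw [hD]
        simp only [hphi_inl, hphi_inr, Pi.zero_apply]
        rw [Finset.sum_congr rfl (fun i _ => mul_comm (A i y) (u i))]
        exact CharTwo.add_self_eq_zero _
    funext x
    rw [← hphi_inl u x, hb]; rfl
  · intro H b hb hDb
    have hbform : b = Phi A (fun x => b (Sum.inl x)) := by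
      funext j
      cases j with
      | inl x => rw [hphi_inl]
      | inr y =>
        rw [hphi_inr]
        have h0 := congrFun hDb y
        rw [hD] at h0
        have h2 : b (Sum.inr y) = ∑ x, A x y * b (Sum.inl x) := by
          have := add_eq_zero_iff_neg_eq.mp h0
          rw [CharTwo.neg_eq] at this
          exact this.symm
        rw [h2]
        exact Finset.sum_congr rfl (fun i _ => mul_comm (A i y) (b (Sum.inl i)))
    have hu : (fun x => b (Sum.inl x)) = 0 := by
      apply H
      intro j hj
      have := hb j hj
      rw [hbform] at this
      exact this
    rw [hbform, hu]
    funext j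
    simp [Phi]

/-- `sumToW2` as an equivalence. -/
def w2Equiv : ((X ⊕ Y) ⊕ (X ⊕ Y)) ≃ ((X ⊕ Y) × Fin 2) where
  toFun := sumToW2
  invFun p :=
    if p.2 = 0 then
      Sum.rec (fun x => Sum.inl (Sum.inl x)) (fun y => Sum.inr (Sum.inr y)) p.1
    else
      Sum.rec (fun x => Sum.inr (Sum.inl x)) (fun y => Sum.inl (Sum.inr y)) p.1
  left_inv := by rintro ((x | y) | (x | y)) <;> simp [sumToW2]
  right_inv := by rintro ⟨v | v, i⟩ <;> fin_cases i <;> simp [sumToW2]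

lemma supp_iff (S : Set ((X ⊕ Y) ⊕ (X ⊕ Y))) (g : ((X ⊕ Y) × Fin 2) → ZMod 2) :
    (∀ p ∉ sumToW2 '' S, g p = 0) ↔
      ((∀ j ∉ {a | Sum.inl a ∈ S}, g (sumToW2 (Sum.inl j)) = 0) ∧
       (∀ j ∉ {a | Sum.inr a ∈ S}, g (sumToW2 (Sum.inr j)) = 0)) := by
  have hinj : Function.Injective (sumToW2 (X := X) (Y := Y)) := w2Equiv.injective
  constructor
  · intro h
    constructor
    · intro j hj
      apply h
      rintro ⟨q, hq, he⟩
      exact hj (by rwa [hinj he] at hq)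
    · intro j hj
      apply h
      rintro ⟨q, hq, he⟩
      exact hj (by rwa [hinj he] at hq)
  · rintro ⟨h1, h2⟩ p hp
    obtain ⟨q, rfl⟩ := w2Equiv.surjective p
    have hqS : q ∉ S := fun hq => hp ⟨q, hq, rfl⟩
    cases q with
    | inl j => exact h1 j hqS
    | inr j => exact h2 j hqS

lemma mv_iff (A : Matrix X Y (ZMod 2)) (g : ((X ⊕ Y) × Fin 2) → ZMod 2) :
    (IAmat (bipAdj A)).mulVec g = 0 ↔
      ((Nmat A).mulVec (fun j => g (sumToW2 (Sum.inl j))) = 0 ∧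
       (Dmat A).mulVec (fun j => g (sumToW2 (Sum.inr j))) = 0) := by
  have h1 : ∀ x, (IAmat (bipAdj A)).mulVec g (Sum.inl x)
      = (Nmat A).mulVec (fun j => g (sumToW2 (Sum.inl j))) x := by
    intro x
    simp [Matrix.mulVec, dotProduct, IAmat, bipAdj, Nmat, sumToW2,
      Fintype.sum_prod_type, Fin.sum_univ_two, Fintype.sum_sum_type,
      Finset.sum_add_distrib, ite_mul, one_mul, zero_mul, Finset.sum_ite_eq]
  have h2 : ∀ y, (IAmat (bipAdj A)).mulVec g (Sum.inr y)
      = (Dmat A).mulVec (fun j => g (sumToW2 (Sum.inr j))) y := by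
    intro y
    simp [Matrix.mulVec, dotProduct, IAmat, bipAdj, Dmat, sumToW2,
      Fintype.sum_prod_type, Fin.sum_univ_two, Fintype.sum_sum_type,
      Finset.sum_add_distrib, ite_mul, one_mul, zero_mul, Finset.sum_ite_eq, add_comm]
  constructor
  · intro h
    constructor
    · funext x; rw [← h1]; exact congrFun h _
    · funext y; rw [← h2]; exact congrFun h _
  · rintro ⟨ha, hb⟩
    funext v
    cases v with
    | inl x => rw [show (0 : (X ⊕ Y) → ZMod 2) (Sum.inl x) = 0 from rfl, h1]; exact congrFun ha x
    | inr y => rw [show (0 : (X ⊕ Y) → ZMod 2) (Sum.inr y) = 0 from rfl, h2]; exact congrFun hb y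

end IAaux

/-- `M[IA(G)]` is isomorphic to `N ⊕ N*` via `sumToW2`: a set is independent in
`N ⊕ N*` (its `N`-part is independent in `N` and its `N*`-part is independent in
the dual of `N`) iff its image is an independent set of columns of `IA(G)`. -/
theorem IA_bipartite_iso_direct_sum
    {X Y : Type} [Fintype X] [DecidableEq X] [Fintype Y] [DecidableEq Y]
    (A : Matrix X Y (ZMod 2)) :
    ∀ S : Set ((X ⊕ Y) ⊕ (X ⊕ Y)),
      (ColIndep (ZMod 2) (Nmat A) {a | Sum.inl a ∈ S} ∧
        DualColIndep (ZMod 2) (Nmat A) {a | Sum.inr a ∈ S})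
      ↔ ColIndep (ZMod 2) (IAmat (bipAdj A)) (sumToW2 '' S) := by
  intro S
  rw [IAaux.colIndep_iff_mulVec, IAaux.dual_iff, ← IAaux.dmat_cond_iff,
    IAaux.colIndep_iff_mulVec]
  constructor
  · rintro ⟨hN, hDu⟩ g hs hm
    rw [IAaux.supp_iff] at hs
    rw [IAaux.mv_iff] at hm
    have ha := hN _ hs.1 hm.1
    have hb := hDu _ hs.2 hm.2
    funext p
    obtain ⟨q, rfl⟩ := IAaux.w2Equiv.surjective p
    cases q with
    | inl j => exact congrFun ha j
    | inr j => exact congrFun hb j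
  · intro h
    constructor
    · intro a hsa hma
      set g : ((X ⊕ Y) × Fin 2) → ZMod 2 :=
        fun p => Sum.elim a (fun _ => (0 : ZMod 2)) (IAaux.w2Equiv.symm p) with hg
      have hgl : ∀ q, g (sumToW2 q) = Sum.elim a (fun _ => (0 : ZMod 2)) q := by
        intro q
        show Sum.elim a (fun _ => (0 : ZMod 2)) (IAaux.w2Equiv.symm (IAaux.w2Equiv q)) = _
        rw [Equiv.symm_apply_apply]
      have hz := h g ?_ ?_
      · funext j
        have := congrFun hz (sumToW2 (Sum.inl j))
        rw [hgl] at this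
        exact this
      · rw [IAaux.supp_iff]
        exact ⟨fun j hj => by rw [hgl]; exact hsa j hj, fun j _ => by rw [hgl]; rfl⟩
      · rw [IAaux.mv_iff]
        constructor
        · have he : (fun j => g (sumToW2 (Sum.inl j))) = a := funext fun j => hgl (Sum.inl j)
          rw [he]; exact hma
        · have he : (fun j => g (sumToW2 (Sum.inr j))) = (0 : (X ⊕ Y) → ZMod 2) :=
            funext fun j => hgl (Sum.inr j)
          rw [he]; exact Matrix.mulVec_zero _

    · intro b hsb hmb
      set g : ((X ⊕ Y) × Fin 2) → ZMod 2 :=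
        fun p => Sum.elim (fun _ => (0 : ZMod 2)) b (IAaux.w2Equiv.symm p) with hg
      have hgl : ∀ q, g (sumToW2 q) = Sum.elim (fun _ => (0 : ZMod 2)) b q := by
        intro q
        show Sum.elim (fun _ => (0 : ZMod 2)) b (IAaux.w2Equiv.symm (IAaux.w2Equiv q)) = _
        rw [Equiv.symm_apply_apply]
      have hz := h g ?_ ?_
      · funext j
        have := congrFun hz (sumToW2 (Sum.inr j))
        rw [hgl] at this
        exact this
      · rw [IAaux.supp_iff]
        exact ⟨fun j _ => by rw [hgl]; rfl, fun j hj => by rw [hgl]; exact hsb j hj⟩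
      · rw [IAaux.mv_iff]
        constructor
        · have he : (fun j => g (sumToW2 (Sum.inl j))) = (0 : (X ⊕ Y) → ZMod 2) :=
            funext fun j => hgl (Sum.inl j)
          rw [he]; exact Matrix.mulVec_zero _

        · have he : (fun j => g (sumToW2 (Sum.inr j))) = b := funext fun j => hgl (Sum.inr j)
          rw [he]; exact hmb
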